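/- Let P be an NN-bisimulation for a neural network N, and let N/P be the quotient network whose nodes in layer i are the classes of P_i, with weights given by pre-sums, and biases and activations given by representatives. For any P-consistent valuation v of layer i-1, the abstraction of the one-step image of v in N equals the one-step image of the abstraction of v in N/P: α([[N]]_i(v)) = [[N/P]]_i(α(v)). -/
import Mathlib


/-- One-step (layer) semantics of a neural network layer. -/
def layerSem {α β : Type*} [Fintype α] (W : α → β → ℝ) (b : β → ℝ) (A : β → ℝ → ℝ)
    (v : α → ℝ) : β → ℝ :=
  fun s' => A s' ((∑ s, W s s' * v s) + b s')

open Classical in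
/-- Pre-sum of a set of previous-layer nodes into a node `s'`. -/
noncomputable def preSum {α β : Type*} [Fintype α] (W : α → β → ℝ) (c : Set α) (s' : β) : ℝ :=
  ∑ s ∈ Finset.univ.filter (fun s => s ∈ c), W s s'

/-- A valuation is `P`-consistent if it is constant on classes. -/
def consistent {α : Type*} (P : Setoid α) (v : α → ℝ) : Prop :=
  ∀ s₁ s₂, P.r s₁ s₂ → v s₁ = v s₂

/-- One layer of the NN-bisimulation condition. -/
def isBisimStep {α β : Type*} [Fintype α] (W : α → β → ℝ) (b : β → ℝ) (A : β → ℝ → ℝ)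
    (Pp : Setoid α) (Pn : Setoid β) : Prop :=
  ∀ s₁ s₂ : β, Pn.r s₁ s₂ →
    A s₁ = A s₂ ∧ b s₁ = b s₂ ∧
    ∀ t : α, preSum W {x | Pp.r x t} s₁ = preSum W {x | Pp.r x t} s₂

/-- One layer of the δ-NN-bisimulation condition. -/
def isDeltaBisimStep {α β : Type*} [Fintype α] (W : α → β → ℝ) (b : β → ℝ) (A : β → ℝ → ℝ)
    (Pp : Setoid α) (Pn : Setoid β) (δ : ℝ) : Prop :=
  ∀ s₁ s₂ : β, Pn.r s₁ s₂ →
    A s₁ = A s₂ ∧ |b s₁ - b s₂| ≤ δ ∧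
    ∀ t : α, |preSum W {x | Pp.r x t} s₁ - preSum W {x | Pp.r x t} s₂| ≤ δ

/-- Semantics of the composition of the first `i` layers of a network. -/
def netSem (S : ℕ → Type) [∀ i, Fintype (S i)] (W : ∀ i, S i → S (i+1) → ℝ)
    (b : ∀ i, S (i+1) → ℝ) (A : ∀ i, S (i+1) → ℝ → ℝ) : (i : ℕ) → (S 0 → ℝ) → S i → ℝ
  | 0, v => v
  | (i+1), v => layerSem (W i) (b i) (A i) (netSem S W b A i v)

/-- Quotient weights: pre-sum of a class into a representative. -/
noncomputable def qW {α β : Type*} [Fintype α] (Pp : Setoid α) (Pn : Setoid β)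
    (W : α → β → ℝ) (c : Quotient Pp) (d : Quotient Pn) : ℝ :=
  preSum W {x | Quotient.mk Pp x = c} d.out

/-- Quotient bias via representative. -/
noncomputable def qb {β : Type*} (Pn : Setoid β) (b : β → ℝ) (d : Quotient Pn) : ℝ := b d.out

/-- Quotient activation via representative. -/
noncomputable def qA {β : Type*} (Pn : Setoid β) (A : β → ℝ → ℝ) (d : Quotient Pn) : ℝ → ℝ :=
  A d.out

/-- Abstraction of a `P`-consistent valuation. -/
noncomputable def absVal {α : Type*} (P : Setoid α) (v : α → ℝ) (c : Quotient P) : ℝ := v c.out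

/-- `vh` is an ε-abstraction of `v`. -/
def isEpsAbs {α : Type*} (P : Setoid α) (ε : ℝ) (v : α → ℝ) (vh : Quotient P → ℝ) : Prop :=
  ∀ s : α, |vh (Quotient.mk P s) - v s| ≤ ε

/-- `v` is (ε,P)-consistent. -/
def epsConsistent {α : Type*} (P : Setoid α) (ε : ℝ) (v : α → ℝ) : Prop :=
  ∀ s₁ s₂, P.r s₁ s₂ → |v s₁ - v s₂| ≤ ε


/-- abstraction commutes with one layer of semantics:
`α([[N]]_i(v)) = [[N/P]]_i(α(v))` for `P`-consistent `v`. -/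
theorem quotient_layer_commutes {α β : Type*} [Fintype α]
    {Pp : Setoid α} {Pn : Setoid β} [Fintype (Quotient Pp)]
    (W : α → β → ℝ) (b : β → ℝ) (A : β → ℝ → ℝ)
    (hbis : isBisimStep W b A Pp Pn)
    (v : α → ℝ) (hv : consistent Pp v) :
    absVal Pn (layerSem W b A v) =
      layerSem (qW Pp Pn W) (qb Pn b) (qA Pn A) (absVal Pp v) := by
  classical
  funext d
  simp only [absVal, layerSem, qb, qA, qW]
  congr 1
  congr 1
  rw [← Finset.sum_fiberwise_of_maps_to (g := Quotient.mk Pp)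
      (t := (Finset.univ : Finset (Quotient Pp))) (fun s _ => Finset.mem_univ _)]
  refine Finset.sum_congr rfl (fun c _ => ?_)
  rw [preSum, Finset.sum_mul]
  refine Finset.sum_congr ?_ (fun s hs => ?_)
  · ext s; simp [Set.mem_setOf_eq]
  · simp only [Finset.mem_filter] at hs
    rw [hv s c.out (Quotient.exact (hs.2.trans (Quotient.out_eq c).symm))]
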